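/- arXiv:2406.01234 — 7 statements merged into one kernel-verified Lean document; each statement's English description precedes it below -/
import Mathlib

section
/- Let S be a finite nonempty set and H ⊆ ℝ^S a nonempty set that is translation-closed: h ∈ H and λ ∈ ℝ imply h + λe ∈ H. Suppose Γ : ℝ^S → ℝ^S is such that for every u ∈ ℝ^S, Γu is the greatest element of {v ∈ H : v ≤ u}. Then Γ is non-expansive for the supremum norm: ‖Γu − Γv‖_∞ ≤ ‖u − v‖_∞ for all u, v ∈ ℝ^S; in particular Γ is continuous. -/
/-- the projection `Γ u := max {v ∈ H : v ≤ u}` onto a nonempty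
translation-closed set `H` is non-expansive for the supremum norm, and in
particular continuous. -/
theorem stmt3 {S : Type*} [Fintype S] [Nonempty S]
    (H : Set (S → ℝ)) (hne : H.Nonempty)
    (htrans : ∀ h ∈ H, ∀ c : ℝ, (h + fun _ => c) ∈ H)
    (Γ : (S → ℝ) → (S → ℝ))
    (hΓ : ∀ u : S → ℝ, Γ u ∈ H ∧ Γ u ≤ u ∧ ∀ v ∈ H, v ≤ u → v ≤ Γ u) :
    (∀ u v : S → ℝ, ‖Γ u - Γ v‖ ≤ ‖u - v‖) ∧ Continuous Γ := by
  have key : ∀ u v : S → ℝ, Γ v ≤ Γ u + fun _ => ‖u - v‖ := by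
    intro u v
    have hmem : (Γ v + fun _ => -‖u - v‖) ∈ H := htrans _ (hΓ v).1 _
    have hle : (Γ v + fun _ => -‖u - v‖) ≤ u := by
      intro s
      have h1 : Γ v s ≤ v s := (hΓ v).2.1 s
      have h2 : |u s - v s| ≤ ‖u - v‖ := by
        simpa using norm_le_pi_norm (u - v) s
      have := abs_le.mp h2
      simp only [Pi.add_apply]
      linarith
    have := (hΓ u).2.2 _ hmem hle
    intro s
    have := this s
    simp only [Pi.add_apply] at this ⊢
    linarith
  have main : ∀ u v : S → ℝ, ‖Γ u - Γ v‖ ≤ ‖u - v‖ := by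
    intro u v
    refine (pi_norm_le_iff_of_nonneg (norm_nonneg _)).mpr fun s => ?_
    have h1 := key u v s
    have h2 := key v u s
    have huv : ‖v - u‖ = ‖u - v‖ := norm_sub_rev v u
    simp only [Pi.add_apply] at h1 h2
    rw [huv] at h2
    simp only [Pi.sub_apply]
    rw [Real.norm_eq_abs, abs_le]
    constructor <;> linarith
  refine ⟨main, ?_⟩
  have : LipschitzWith 1 Γ := by
    intro u v
    rw [edist_dist, edist_dist, dist_eq_norm, dist_eq_norm]
    simpa using ENNReal.ofReal_le_ofReal (main u v)
  exact this.continuous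
end

section
/- In the setting of the β-mitigated extended Bellman operator, assume each reward set R(s,a) is nonempty and compact and each kernel set P(s,a) is a nonempty compact convex set of probability vectors on S. Then L^β is non-span-expansive: for all u, v ∈ ℝ^S, sp(L^β u − L^β v) ≤ sp(u − v). -/
/-- The span of a vector `u ∈ ℝ^S`: `sp u = max u - min u`. -/
noncomputable def sp {S : Type*} [Fintype S] [Nonempty S] (u : S → ℝ) : ℝ :=
  (⨆ s, u s) - ⨅ s, u s

/-- The β-mitigated extended Bellman operator:
`L^β u (s) = max_{a} sup_{r̃ ∈ R(s,a)} sup_{p̃ ∈ P(s,a)}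
    (r̃ + min (p̃·u) (p̂(s,a)·u + β(s,a)))`. -/
noncomputable def Lbeta {S : Type*} [Fintype S] {A : S → Type*}
    (R : ∀ s : S, A s → Set ℝ) (P : ∀ s : S, A s → Set (S → ℝ))
    (phat : ∀ s : S, A s → S → ℝ) (β : ∀ s : S, A s → ℝ)
    (u : S → ℝ) (s : S) : ℝ :=
  ⨆ a : A s, sSup {x : ℝ | ∃ r ∈ R s a, ∃ p ∈ P s a,
    x = r + min (∑ s', p s' * u s') ((∑ s', phat s a s' * u s') + β s a)}

lemma prob_dot_le {S : Type*} [Fintype S] [Nonempty S] (p w : S → ℝ)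
    (h0 : ∀ s, 0 ≤ p s) (h1 : ∑ s, p s = 1) :
    ∑ s, p s * w s ≤ ⨆ t, w t := by
  calc ∑ s, p s * w s ≤ ∑ s, p s * (⨆ t, w t) := by
        refine Finset.sum_le_sum fun s _ => ?_
        exact mul_le_mul_of_nonneg_left (le_ciSup (Finite.bddAbove_range w) s) (h0 s)
    _ = ⨆ t, w t := by rw [← Finset.sum_mul, h1, one_mul]

lemma key_le {S : Type*} [Fintype S] [Nonempty S]
    {A : S → Type*} [∀ s, Fintype (A s)] [∀ s, Nonempty (A s)]
    (R : ∀ s : S, A s → Set ℝ) (P : ∀ s : S, A s → Set (S → ℝ))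
    (phat : ∀ s : S, A s → S → ℝ) (β : ∀ s : S, A s → ℝ)
    (hRne : ∀ s a, (R s a).Nonempty) (hRcomp : ∀ s a, IsCompact (R s a))
    (hPne : ∀ s a, (P s a).Nonempty)
    (hP : ∀ s a, ∀ p ∈ P s a, (∀ s', 0 ≤ p s') ∧ ∑ s', p s' = 1)
    (hphat : ∀ s a, (∀ s', 0 ≤ phat s a s') ∧ ∑ s', phat s a s' = 1)
    (u v : S → ℝ) (s : S) :
    Lbeta R P phat β u s - Lbeta R P phat β v s ≤ ⨆ t, (u t - v t) := by
  set M := ⨆ t, (u t - v t) with hM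
  -- notation for the sets
  set Xu : A s → Set ℝ := fun a => {x : ℝ | ∃ r ∈ R s a, ∃ p ∈ P s a,
    x = r + min (∑ s', p s' * u s') ((∑ s', phat s a s' * u s') + β s a)} with hXu
  set Xv : A s → Set ℝ := fun a => {x : ℝ | ∃ r ∈ R s a, ∃ p ∈ P s a,
    x = r + min (∑ s', p s' * v s') ((∑ s', phat s a s' * v s') + β s a)} with hXv
  have hXvbdd : ∀ a, BddAbove (Xv a) := by
    intro a
    refine ⟨sSup (R s a) + ((∑ s', phat s a s' * v s') + β s a), ?_⟩
    rintro x ⟨r, hr, p, hp, rfl⟩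
    have h1 : r ≤ sSup (R s a) := le_csSup (hRcomp s a).bddAbove hr
    have h2 := min_le_right (∑ s', p s' * v s') ((∑ s', phat s a s' * v s') + β s a)
    linarith
  have hXvne : ∀ a, (Xv a).Nonempty := by
    intro a
    obtain ⟨r, hr⟩ := hRne s a
    obtain ⟨p, hp⟩ := hPne s a
    exact ⟨_, r, hr, p, hp, rfl⟩
  have hsub : ∀ a, sSup (Xu a) ≤ sSup (Xv a) + M := by
    intro a
    have hXune : (Xu a).Nonempty := by
      obtain ⟨r, hr⟩ := hRne s a
      obtain ⟨p, hp⟩ := hPne s a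
      exact ⟨_, r, hr, p, hp, rfl⟩
    refine csSup_le hXune ?_
    rintro x ⟨r, hr, p, hp, rfl⟩
    have hy : r + min (∑ s', p s' * v s') ((∑ s', phat s a s' * v s') + β s a) ∈ Xv a :=
      ⟨r, hr, p, hp, rfl⟩
    have hyle := le_csSup (hXvbdd a) hy
    -- pointwise bound
    have hpdot : (∑ s', p s' * u s') - (∑ s', p s' * v s') ≤ M := by
      have : (∑ s', p s' * u s') - (∑ s', p s' * v s') = ∑ s', p s' * (u s' - v s') := by
        rw [← Finset.sum_sub_distrib]
        exact Finset.sum_congr rfl fun s' _ => (mul_sub _ _ _).symm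
      rw [this]
      exact prob_dot_le p (fun t => u t - v t) (hP s a p hp).1 (hP s a p hp).2
    have hhdot : (∑ s', phat s a s' * u s') - (∑ s', phat s a s' * v s') ≤ M := by
      have : (∑ s', phat s a s' * u s') - (∑ s', phat s a s' * v s')
          = ∑ s', phat s a s' * (u s' - v s') := by
        rw [← Finset.sum_sub_distrib]
        exact Finset.sum_congr rfl fun s' _ => (mul_sub _ _ _).symm
      rw [this]
      exact prob_dot_le _ (fun t => u t - v t) (hphat s a).1 (hphat s a).2
    have hmin : min (∑ s', p s' * u s') ((∑ s', phat s a s' * u s') + β s a)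
        ≤ min (∑ s', p s' * v s') ((∑ s', phat s a s' * v s') + β s a) + M := by
      rcases min_cases (∑ s', p s' * v s') ((∑ s', phat s a s' * v s') + β s a) with
        ⟨h, _⟩ | ⟨h, _⟩
      · rw [h]
        have := min_le_left (∑ s', p s' * u s') ((∑ s', phat s a s' * u s') + β s a)
        linarith
      · rw [h]
        have := min_le_right (∑ s', p s' * u s') ((∑ s', phat s a s' * u s') + β s a)
        linarith
    linarith
  have hLu : Lbeta R P phat β u s ≤ Lbeta R P phat β v s + M := by
    rw [Lbeta, Lbeta]
    refine ciSup_le fun a => ?_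
    have h1 : sSup (Xv a) ≤ ⨆ a', sSup (Xv a') :=
      le_ciSup (Finite.bddAbove_range (fun a' => sSup (Xv a'))) a
    have h2 := hsub a
    calc sSup (Xu a) ≤ sSup (Xv a) + M := h2
      _ ≤ (⨆ a', sSup (Xv a')) + M := by linarith
  linarith

/-- if each `R(s,a)` is nonempty compact and each `P(s,a)` is a nonempty
compact convex set of probability vectors, then `L^β` is non-span-expansive. -/
theorem stmt5 {S : Type*} [Fintype S] [Nonempty S]
    {A : S → Type*} [∀ s, Fintype (A s)] [∀ s, Nonempty (A s)]
    (R : ∀ s : S, A s → Set ℝ) (P : ∀ s : S, A s → Set (S → ℝ))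
    (phat : ∀ s : S, A s → S → ℝ) (β : ∀ s : S, A s → ℝ)
    (hRne : ∀ s a, (R s a).Nonempty) (hRcomp : ∀ s a, IsCompact (R s a))
    (hPne : ∀ s a, (P s a).Nonempty) (hPcomp : ∀ s a, IsCompact (P s a))
    (hPconv : ∀ s a, Convex ℝ (P s a))
    (hP : ∀ s a, ∀ p ∈ P s a, (∀ s', 0 ≤ p s') ∧ ∑ s', p s' = 1)
    (hphat : ∀ s a, (∀ s', 0 ≤ phat s a s') ∧ ∑ s', phat s a s' = 1)
    (hβ : ∀ s a, 0 ≤ β s a) :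
    ∀ u v : S → ℝ,
      sp (Lbeta R P phat β u - Lbeta R P phat β v) ≤ sp (u - v) := by
  intro u v
  set M := ⨆ t, (u t - v t) with hM
  set m := ⨅ t, (u t - v t) with hm
  have hub : ∀ s, Lbeta R P phat β u s - Lbeta R P phat β v s ≤ M :=
    key_le R P phat β hRne hRcomp hPne hP hphat u v
  have hswap : ∀ s, Lbeta R P phat β v s - Lbeta R P phat β u s ≤ ⨆ t, (v t - u t) :=
    key_le R P phat β hRne hRcomp hPne hP hphat v u
  have hneg : (⨆ t, (v t - u t)) ≤ -m := by
    refine ciSup_le fun t => ?_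
    have : m ≤ u t - v t := ciInf_le (Finite.bddBelow_range _) t
    linarith
  have hlb : ∀ s, m ≤ Lbeta R P phat β u s - Lbeta R P phat β v s := by
    intro s
    have := hswap s
    linarith
  rw [sp, sp]
  have h1 : (⨆ s, (Lbeta R P phat β u - Lbeta R P phat β v) s) ≤ M := by
    refine ciSup_le fun s => ?_
    simpa using hub s
  have h2 : m ≤ ⨅ s, (Lbeta R P phat β u - Lbeta R P phat β v) s := by
    refine le_ciInf fun s => ?_
    simpa using hlb s
  have h3 : (⨆ s, (u - v) s) = M := by simp [hM]
  have h4 : (⨅ s, (u - v) s) = m := by simp [hm]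
  rw [h3, h4]
  linarith
end

section
/- Let S be a finite nonempty set and F : ℝ^S → ℝ^S a map that is monotone (u ≤ v pointwise implies F(u) ≤ F(v)) and satisfies F(u + λe) = F(u) + λe for all u and λ ∈ ℝ. Suppose u ∈ ℝ^S and g ∈ ℝ satisfy F(u) = u + g·e. Then for every v ∈ ℝ^S and every n ∈ ℕ, setting c := ‖v − u‖_∞, one has u + (n·g − c)·e ≤ Fⁿ(v) ≤ u + (n·g + c)·e, where Fⁿ denotes the n-fold iterate of F. -/
lemma stmt8_aux {S : Type*} [Fintype S] [Nonempty S]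
    (F : (S → ℝ) → (S → ℝ))
    (hshift : ∀ (u : S → ℝ) (c : ℝ), F (u + fun _ => c) = F u + fun _ => c)
    (u : S → ℝ) (g : ℝ) (hfix : F u = u + fun _ => g) (a : ℝ) :
    F (u + fun _ => a) = u + fun _ => g + a := by
  rw [hshift, hfix]
  funext s; simp [add_assoc]

/-- if `F` is monotone and shift-equivariant with span fix-point
`F u = u + g·e`, then for every `v` and `n`, with `c = ‖v - u‖_∞`,
`u + (n·g - c)·e ≤ Fⁿ v ≤ u + (n·g + c)·e`. -/
theorem stmt8 {S : Type*} [Fintype S] [Nonempty S]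
    (F : (S → ℝ) → (S → ℝ)) (hmono : Monotone F)
    (hshift : ∀ (u : S → ℝ) (c : ℝ), F (u + fun _ => c) = F u + fun _ => c)
    (u : S → ℝ) (g : ℝ) (hfix : F u = u + fun _ => g)
    (v : S → ℝ) (n : ℕ) :
    (u + fun _ => (n : ℝ) * g - ‖v - u‖) ≤ F^[n] v ∧
      F^[n] v ≤ u + fun _ => (n : ℝ) * g + ‖v - u‖ := by
  induction n with
  | zero =>
    constructor <;> intro s <;>
    · have h := norm_le_pi_norm (v - u) s
      simp only [Pi.sub_apply, Real.norm_eq_abs, abs_le] at h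
      simp only [Nat.cast_zero, zero_mul, Function.iterate_zero, id_eq, Pi.add_apply]
      cases h with | intro h1 h2 => linarith
  | succ n ih =>
    obtain ⟨ih1, ih2⟩ := ih
    rw [Function.iterate_succ_apply']
    push_cast
    constructor
    · calc (u + fun _ => ((n : ℕ) + 1 : ℝ) * g - ‖v - u‖)
          = F (u + fun _ => (n : ℝ) * g - ‖v - u‖) := by
            rw [stmt8_aux F hshift u g hfix]; funext s; simp; ring
        _ ≤ F (F^[n] v) := hmono ih1
    · calc F (F^[n] v) ≤ F (u + fun _ => (n : ℝ) * g + ‖v - u‖) := hmono ih2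
        _ = u + fun _ => ((n : ℕ) + 1 : ℝ) * g + ‖v - u‖ := by
            rw [stmt8_aux F hshift u g hfix]; funext s; simp; ring
end

section
/- Let S be a finite nonempty set and F : ℝ^S → ℝ^S a map that is monotone (u ≤ v pointwise implies F(u) ≤ F(v)) and satisfies F(u + λe) = F(u) + λe for all u and λ ∈ ℝ. If u, u' ∈ ℝ^S and g, g' ∈ ℝ satisfy F(u) = u + g·e and F(u') = u' + g'·e, then g = g'. In other words, all span fix-points of F have the same growth (gain). -/
lemma stmt9aux {S : Type*} [Fintype S] [Nonempty S]
    (F : (S → ℝ) → (S → ℝ)) (hmono : Monotone F)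
    (hshift : ∀ (u : S → ℝ) (c : ℝ), F (u + fun _ => c) = F u + fun _ => c)
    (u u' : S → ℝ) (g g' : ℝ)
    (hfix : F u = u + fun _ => g) (hfix' : F u' = u' + fun _ => g') :
    g ≤ g' := by
  obtain ⟨s, hs⟩ := Finite.exists_max (fun t => u t - u' t)
  set c := u s - u' s with hc
  have h1 : u ≤ u' + fun _ => c := by
    intro t
    have := hs t
    simp only [Pi.add_apply]
    linarith
  have h2 : F u ≤ F u' + fun _ => c := by
    rw [← hshift]; exact hmono h1
  have h3 := h2 s
  rw [hfix, hfix'] at h3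
  simp only [Pi.add_apply] at h3
  linarith

/-- all span fix-points of a monotone, shift-equivariant map have the
same growth (gain). -/
theorem stmt9 {S : Type*} [Fintype S] [Nonempty S]
    (F : (S → ℝ) → (S → ℝ)) (hmono : Monotone F)
    (hshift : ∀ (u : S → ℝ) (c : ℝ), F (u + fun _ => c) = F u + fun _ => c)
    (u u' : S → ℝ) (g g' : ℝ)
    (hfix : F u = u + fun _ => g) (hfix' : F u' = u' + fun _ => g') :
    g = g' :=
  le_antisymm (stmt9aux F hmono hshift u u' g g' hfix hfix')
    (stmt9aux F hmono hshift u' u g' g hfix' hfix)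
end

section
/- Let S be a finite nonempty set and F : ℝ^S → ℝ^S a map that is monotone (u ≤ v pointwise implies F(u) ≤ F(v)) and satisfies F(u + λe) = F(u) + λe for all u and λ ∈ ℝ. Suppose u ∈ ℝ^S and g ∈ ℝ satisfy F(u) = u + g·e. Then for every v ∈ ℝ^S and every s ∈ S, the sequence (Fⁿ(v))(s)/n converges to g as n → ∞. -/
open Filter

/-- if `F` is monotone and shift-equivariant with a span fix-point
`F u = u + g·e`, then for every `v` and `s`, `Fⁿ(v)(s)/n → g`. -/
theorem stmt10 {S : Type*} [Fintype S] [Nonempty S]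
    (F : (S → ℝ) → (S → ℝ)) (hmono : Monotone F)
    (hshift : ∀ (u : S → ℝ) (c : ℝ), F (u + fun _ => c) = F u + fun _ => c)
    (u : S → ℝ) (g : ℝ) (hfix : F u = u + fun _ => g)
    (v : S → ℝ) (s : S) :
    Tendsto (fun n : ℕ => F^[n] v s / (n : ℝ)) atTop (nhds g) := by
  -- iterated shift equivariance
  have hiter_shift : ∀ (n : ℕ) (w : S → ℝ) (c : ℝ),
      F^[n] (w + fun _ => c) = F^[n] w + fun _ => c := by
    intro n
    induction n with
    | zero => intro w c; simp
    | succ n ih =>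
      intro w c
      rw [Function.iterate_succ_apply', Function.iterate_succ_apply', ih, hshift]
  -- iterated fixed point
  have hiter_fix : ∀ n : ℕ, F^[n] u = u + fun _ => n * g := by
    intro n
    induction n with
    | zero => simp; rfl
    | succ n ih =>
      rw [Function.iterate_succ_apply', ih]
      have : (u + fun _ => (n : ℝ) * g) = ((u + fun _ => (n : ℝ) * g)) := rfl
      rw [hshift, hfix]
      funext t
      simp [Pi.add_apply]
      push_cast
      ring
  set c : ℝ := Finset.univ.sup' Finset.univ_nonempty fun t => |v t - u t| with hc
  have hcb : ∀ t, |v t - u t| ≤ c := fun t =>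
    Finset.le_sup' (f := fun t => |v t - u t|) (Finset.mem_univ t)
  have hlo : (u + fun _ => -c) ≤ v := by
    intro t
    have := abs_le.mp (hcb t)
    simp only [Pi.add_apply]
    linarith [this.1]
  have hhi : v ≤ (u + fun _ => c) := by
    intro t
    have := abs_le.mp (hcb t)
    simp only [Pi.add_apply]
    linarith [this.2]
  have hboundlo : ∀ n : ℕ, ∀ t, u t + n * g - c ≤ F^[n] v t := by
    intro n t
    have h := hmono.iterate n hlo
    have h2 := h t
    rw [hiter_shift n u (-c), hiter_fix n] at h2
    simp only [Pi.add_apply] at h2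
    linarith
  have hboundhi : ∀ n : ℕ, ∀ t, F^[n] v t ≤ u t + n * g + c := by
    intro n t
    have h := hmono.iterate n hhi
    have h2 := h t
    rw [hiter_shift n u c, hiter_fix n] at h2
    simp only [Pi.add_apply] at h2
    linarith
  -- squeeze
  have hL : Tendsto (fun n : ℕ => (u s - c) / (n : ℝ) + g) atTop (nhds g) := by
    have := (tendsto_const_div_atTop_nhds_zero_nat (u s - c)).add_const g
    simpa using this
  have hR : Tendsto (fun n : ℕ => (u s + c) / (n : ℝ) + g) atTop (nhds g) := by
    have := (tendsto_const_div_atTop_nhds_zero_nat (u s + c)).add_const g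
    simpa using this
  refine tendsto_of_tendsto_of_tendsto_of_le_of_le' hL hR ?_ ?_
  · filter_upwards [eventually_ge_atTop 1] with n hn
    have hn' : (0 : ℝ) < n := by exact_mod_cast hn
    have := hboundlo n s
    rw [div_add' _ _ _ (ne_of_gt hn')]
    rw [div_le_div_iff₀ hn' hn']
    nlinarith [this]
  · filter_upwards [eventually_ge_atTop 1] with n hn
    have hn' : (0 : ℝ) < n := by exact_mod_cast hn
    have := hboundhi n s
    rw [div_add' _ _ _ (ne_of_gt hn')]
    rw [div_le_div_iff₀ hn' hn']
    nlinarith [this]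
end

section
/- Let S be a finite nonempty set and F : ℝ^S → ℝ^S a map that is monotone (u ≤ v pointwise implies F(u) ≤ F(v)) and satisfies F(u + λe) = F(u) + λe for all u and λ ∈ ℝ. Suppose u ∈ ℝ^S and g ∈ ℝ satisfy F(u) = u + g·e. If there exist h ∈ ℝ^S and g̃ ∈ ℝ with h + g̃·e ≤ F(h) (pointwise), then g̃ ≤ g. -/
/-- if `F` is monotone and shift-equivariant with a span fix-point
`F u = u + g·e`, and if `h + g̃·e ≤ F h` pointwise for some `h` and `g̃`, then `g̃ ≤ g`. -/
theorem stmt11 {S : Type*} [Fintype S] [Nonempty S]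
    (F : (S → ℝ) → (S → ℝ)) (hmono : Monotone F)
    (hshift : ∀ (u : S → ℝ) (c : ℝ), F (u + fun _ => c) = F u + fun _ => c)
    (u : S → ℝ) (g : ℝ) (hfix : F u = u + fun _ => g)
    (h : S → ℝ) (gt : ℝ) (hsub : (h + fun _ => gt) ≤ F h) :
    gt ≤ g := by
  -- F^[n] u = u + n g
  have hu : ∀ n : ℕ, F^[n] u = u + fun _ => n * g := by
    intro n
    induction n with
    | zero => funext s; simp
    | succ n ih =>
      rw [Function.iterate_succ_apply', ih, hshift, hfix]
      funext s; simp; ring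
  -- F^[n] h ≥ h + n gt
  have hh : ∀ n : ℕ, (h + fun _ => n * gt) ≤ F^[n] h := by
    intro n
    induction n with
    | zero => intro s; simp
    | succ n ih =>
      rw [Function.iterate_succ_apply']
      calc (h + fun _ => (n+1 : ℕ) * gt) = (h + fun _ => gt) + fun _ => (n : ℕ) * gt := by
            funext s; simp; ring
        _ ≤ F h + fun _ => (n : ℕ) * gt := by
            intro s; exact add_le_add_left (hsub s) _
        _ = F (h + fun _ => (n : ℕ) * gt) := (hshift h _).symm
        _ ≤ F (F^[n] h) := hmono ih
  obtain ⟨s0⟩ := ‹Nonempty S›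
  -- choose c with h ≤ u + c
  obtain ⟨c, hc⟩ : ∃ c : ℝ, ∀ s, h s ≤ u s + c := by
    refine ⟨Finset.univ.sup' Finset.univ_nonempty (fun s => h s - u s), fun s => ?_⟩
    have := Finset.le_sup' (fun s => h s - u s) (Finset.mem_univ s)
    linarith
  have huc : ∀ n : ℕ, F^[n] (u + fun _ => c) = F^[n] u + fun _ => c := by
    intro n
    induction n with
    | zero => rfl
    | succ n ih => rw [Function.iterate_succ_apply', ih, hshift, Function.iterate_succ_apply']
  have key : ∀ n : ℕ, h s0 + n * gt ≤ u s0 + n * g + c := by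
    intro n
    have h1 := hh n s0
    have h2 : F^[n] h s0 ≤ u s0 + n * g + c := by
      have : F^[n] h ≤ F^[n] (u + fun _ => c) := hmono.iterate n (fun s => hc s)
      have h3 := this s0
      rw [huc n, hu n] at h3
      simpa using h3
    simp only [Pi.add_apply] at h1
    linarith
  by_contra hlt
  push_neg at hlt
  obtain ⟨n, hn⟩ := Archimedean.arch (u s0 + c - h s0) (sub_pos.mpr hlt)
  have := key (n + 1)
  simp [nsmul_eq_mul] at hn
  push_cast at this
  nlinarith [sub_pos.mpr hlt]
end

section
/- Let S be a finite nonempty set, q a probability vector on S, c₀ ≥ 0 a real, s ∈ S a fixed state, and c, d : S × S → ℝ. Let u, v ∈ ℝ^S satisfy sp(u) ≤ c₀, sp(v) ≤ c₀, and for every s' ∈ S: |u(s') − u(s) − c(s',s)| ≤ d(s',s) and |v(s') − v(s) − c(s',s)| ≤ d(s',s). Then V(q,u) ≤ V(q,v) + 8·c₀·Σ_{s' ∈ S} q(s')·d(s',s). -/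
/-- Variance of `u` under the probability vector `q`:
`V(q,u) = Σ_s q s · (u s - q·u)²`. -/
noncomputable def Var {S : Type*} [Fintype S] (q u : S → ℝ) : ℝ :=
  ∑ s, q s * (u s - ∑ s', q s' * u s') ^ 2

lemma mean_dev_le_sp {S : Type*} [Fintype S] [Nonempty S]
    (q : S → ℝ) (hq0 : ∀ s, 0 ≤ q s) (hq1 : ∑ s, q s = 1)
    (u : S → ℝ) (s' : S) : |u s' - ∑ t, q t * u t| ≤ sp u := by
  have hsup : u s' ≤ ⨆ t, u t := le_ciSup (Set.Finite.bddAbove (Set.finite_range u)) s'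
  have hinf : ⨅ t, u t ≤ u s' := ciInf_le (Set.Finite.bddBelow (Set.finite_range u)) s'
  have hm1 : ∑ t, q t * u t ≤ ⨆ t, u t := by
    calc ∑ t, q t * u t ≤ ∑ t, q t * (⨆ r, u r) := by
          apply Finset.sum_le_sum
          intro t _
          exact mul_le_mul_of_nonneg_left (le_ciSup (Set.Finite.bddAbove (Set.finite_range u)) t) (hq0 t)
      _ = ⨆ r, u r := by rw [← Finset.sum_mul, hq1, one_mul]
  have hm2 : ⨅ t, u t ≤ ∑ t, q t * u t := by
    calc (⨅ t, u t) = ∑ t, q t * (⨅ r, u r) := by rw [← Finset.sum_mul, hq1, one_mul]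
      _ ≤ ∑ t, q t * u t := by
          apply Finset.sum_le_sum
          intro t _
          exact mul_le_mul_of_nonneg_left (ciInf_le (Set.Finite.bddBelow (Set.finite_range u)) t) (hq0 t)
  rw [abs_le]
  unfold sp
  constructor <;> linarith

/-- if `u, v` have span at most `c₀` and both satisfy the difference
constraints `|w s' - w s - c(s',s)| ≤ d(s',s)`, then
`V(q,u) ≤ V(q,v) + 8·c₀·Σ_{s'} q s'·d(s',s)`. -/
theorem stmt14 {S : Type*} [Fintype S] [Nonempty S]
    (q : S → ℝ) (hq0 : ∀ s, 0 ≤ q s) (hq1 : ∑ s, q s = 1)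
    (c0 : ℝ) (hc0 : 0 ≤ c0) (s : S) (c d : S → S → ℝ)
    (u v : S → ℝ) (hspu : sp u ≤ c0) (hspv : sp v ≤ c0)
    (hu : ∀ s', |u s' - u s - c s' s| ≤ d s' s)
    (hv : ∀ s', |v s' - v s - c s' s| ≤ d s' s) :
    Var q u ≤ Var q v + 8 * c0 * ∑ s', q s' * d s' s := by
  set mu := ∑ t, q t * u t with hmu
  set mv := ∑ t, q t * v t with hmv
  set e : S → ℝ := fun s' => u s' - v s' - (u s - v s) with he_def
  set D := ∑ s', q s' * d s' s with hD
  have he : ∀ s', |e s'| ≤ 2 * d s' s := by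
    intro s'
    have h1 := hu s'
    have h2 := hv s'
    calc |e s'| = |(u s' - u s - c s' s) - (v s' - v s - c s' s)| := by
          simp only [he_def]; ring_nf
      _ ≤ |u s' - u s - c s' s| + |v s' - v s - c s' s| := abs_sub _ _
      _ ≤ 2 * d s' s := by linarith
  set me := ∑ s', q s' * e s' with hme_def
  have hme : me = mu - mv - (u s - v s) := by
    have h : ∀ s', q s' * e s' = q s' * u s' - q s' * v s' - (u s - v s) * q s' := by
      intro s'; simp only [he_def]; ring
    simp only [hme_def, h]
    rw [Finset.sum_sub_distrib, Finset.sum_sub_distrib, ← Finset.mul_sum, hq1, mul_one]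
  have hmeM : |me| ≤ 2 * D := by
    calc |me| ≤ ∑ s', |q s' * e s'| := Finset.abs_sum_le_sum_abs _ _
      _ ≤ ∑ s', q s' * (2 * d s' s) := by
          apply Finset.sum_le_sum
          intro t _
          rw [abs_mul, abs_of_nonneg (hq0 t)]
          exact mul_le_mul_of_nonneg_left (he t) (hq0 t)
      _ = 2 * D := by rw [hD, Finset.mul_sum]; apply Finset.sum_congr rfl; intros; ring
  have key : ∀ s', u s' - mu = (v s' - mv) + (e s' - me) := by
    intro s'
    simp only [he_def]
    rw [hme]; ring
  have hbu : ∀ s', |u s' - mu| ≤ c0 := fun s' =>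
    (mean_dev_le_sp q hq0 hq1 u s').trans hspu
  have hbv : ∀ s', |v s' - mv| ≤ c0 := fun s' =>
    (mean_dev_le_sp q hq0 hq1 v s').trans hspv
  have hterm : ∀ s' ∈ Finset.univ, q s' * (u s' - mu) ^ 2 ≤
      q s' * (v s' - mv) ^ 2 + q s' * (2 * c0 * (2 * d s' s + 2 * D)) := by
    intro s' _
    have habs : |e s' - me| ≤ 2 * d s' s + 2 * D := by
      calc |e s' - me| ≤ |e s'| + |me| := abs_sub _ _
        _ ≤ 2 * d s' s + 2 * D := add_le_add (he s') hmeM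
    have hA : |(u s' - mu) + (v s' - mv)| ≤ 2 * c0 := by
      calc |(u s' - mu) + (v s' - mv)| ≤ |u s' - mu| + |v s' - mv| := abs_add_le _ _
        _ ≤ 2 * c0 := by have := hbu s'; have := hbv s'; linarith
    have h1 : (u s' - mu) ^ 2 - (v s' - mv) ^ 2 ≤ 2 * c0 * (2 * d s' s + 2 * D) := by
      calc (u s' - mu) ^ 2 - (v s' - mv) ^ 2
          = ((u s' - mu) + (v s' - mv)) * (e s' - me) := by rw [key s']; ring
        _ ≤ |((u s' - mu) + (v s' - mv)) * (e s' - me)| := le_abs_self _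
        _ = |(u s' - mu) + (v s' - mv)| * |e s' - me| := abs_mul _ _
        _ ≤ (2 * c0) * (2 * d s' s + 2 * D) :=
            mul_le_mul hA habs (abs_nonneg _) (by linarith)
    nlinarith [hq0 s', mul_le_mul_of_nonneg_left h1 (hq0 s')]
  have hsum := Finset.sum_le_sum hterm
  have hcalc : ∑ s', (q s' * (v s' - mv) ^ 2 + q s' * (2 * c0 * (2 * d s' s + 2 * D)))
      = Var q v + 8 * c0 * D := by
    rw [Finset.sum_add_distrib]
    have : ∑ s', q s' * (2 * c0 * (2 * d s' s + 2 * D)) = 8 * c0 * D := by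
      have expand : ∀ s', q s' * (2 * c0 * (2 * d s' s + 2 * D))
          = 4 * c0 * (q s' * d s' s) + 4 * c0 * D * q s' := by intro s'; ring
      simp only [expand]
      rw [Finset.sum_add_distrib, ← Finset.mul_sum, ← Finset.mul_sum, hq1, ← hD]
      ring
    rw [this]; rfl
  calc Var q u = ∑ s', q s' * (u s' - mu) ^ 2 := rfl
    _ ≤ _ := hsum
    _ = Var q v + 8 * c0 * D := hcalc
end
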